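/- arXiv:2108.02715 — 2 statements merged into one kernel-verified Lean document; each statement's English description precedes it below -/
import Mathlib

section
/- For every population of n ≥ 2 rows of which m satisfy a predicate (0 < m ≤ n, p = m/n), every sample size 1 ≤ k < n, and every real q ≥ 1, the hypergeometric random variable X̂ counting satisfying rows among k rows drawn uniformly without replacement satisfies P(X̂ < k·p/q) ≤ exp(−2k·(p−p/q)²/ρ). (Hoeffding–Serfling bound for the under-estimation probability of sampling without replacement.) -/
lemma hoeffding_scalar (θ y : ℝ) (h0 : 0 ≤ θ) (h1 : θ ≤ 1) :
    (1 - θ) * Real.exp (θ * y) + θ * Real.exp ((θ - 1) * y) ≤ Real.exp (y ^ 2 / 8) := by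
  set D : ℝ → ℝ := fun u => 1 - θ + θ * Real.exp u with hD
  have hDpos : ∀ u, 0 < D u := by
    intro u
    rcases eq_or_lt_of_le h0 with h | h
    · simp [hD, ← h]
    · have := mul_pos h (Real.exp_pos u)
      simp only [hD]; linarith
  set g : ℝ → ℝ := fun u => θ * u + u ^ 2 / 8 - Real.log (D u) with hg
  have hDder : ∀ u, HasDerivAt D (θ * Real.exp u) u := by
    intro u
    exact ((Real.hasDerivAt_exp u).const_mul θ).const_add (1 - θ)
  set g' : ℝ → ℝ := fun u => θ + u / 4 - θ * Real.exp u / D u with hg'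
  have hgder : ∀ u, HasDerivAt g (g' u) u := by
    intro u
    have hlog : HasDerivAt (fun u => Real.log (D u)) (θ * Real.exp u / D u) u :=
      (Real.hasDerivAt_log (hDpos u).ne').comp u (hDder u) |>.congr_deriv (by ring)
    have h2 : HasDerivAt (fun u : ℝ => θ * u + u ^ 2 / 8) (θ + 2 * u / 8) u := by
      exact (((hasDerivAt_id u).const_mul θ).add (((hasDerivAt_pow 2 u)).div_const 8)).congr_deriv (by norm_num)
    exact (h2.sub hlog).congr_deriv (by ring)
  have hg'der : ∀ u, HasDerivAt g' (1/4 - (θ * Real.exp u / D u) * (1 - θ * Real.exp u / D u)) u := by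
    intro u
    have hnum : HasDerivAt (fun u => θ * Real.exp u) (θ * Real.exp u) u := by
      simpa using (Real.hasDerivAt_exp u).const_mul θ
    have hq : HasDerivAt (fun u => θ * Real.exp u / D u)
        ((θ * Real.exp u * D u - θ * Real.exp u * (θ * Real.exp u)) / (D u) ^ 2) u :=
      hnum.div (hDder u) (hDpos u).ne'
    have h2 : HasDerivAt (fun u : ℝ => θ + u / 4) (1/4) u := by
      simpa using ((hasDerivAt_id u).div_const 4).const_add θ
    have h3 := h2.sub hq
    refine h3.congr_deriv ?_
    have hD0 : D u ≠ 0 := (hDpos u).ne'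
    field_simp
  have hg'mono : Monotone g' := by
    apply monotone_of_deriv_nonneg
    · exact fun u => (hg'der u).differentiableAt
    · intro u
      rw [(hg'der u).deriv]
      set t := θ * Real.exp u / D u
      nlinarith [sq_nonneg (t - 1/2)]
  have hg'0 : g' 0 = 0 := by simp [hg', hD]
  have hgdiff : Differentiable ℝ g := fun u => (hgder u).differentiableAt
  have hg0 : g 0 = 0 := by simp [hg, hD]
  have hgnonneg : ∀ u, 0 ≤ g u := by
    intro u
    rcases le_total 0 u with h | h
    · have hm : MonotoneOn g (Set.Ici 0) := by
        apply monotoneOn_of_deriv_nonneg (convex_Ici 0) hgdiff.continuous.continuousOn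
          (fun x _ => (hgdiff x).differentiableWithinAt)
        intro x hx
        rw [interior_Ici] at hx
        rw [(hgder x).deriv, ← hg'0]
        exact hg'mono hx.le
      have := hm (Set.mem_Ici.mpr le_rfl) (Set.mem_Ici.mpr h) h
      linarith
    · have hm : AntitoneOn g (Set.Iic 0) := by
        apply antitoneOn_of_deriv_nonpos (convex_Iic 0) hgdiff.continuous.continuousOn
          (fun x _ => (hgdiff x).differentiableWithinAt)
        intro x hx
        rw [interior_Iic] at hx
        rw [(hgder x).deriv, ← hg'0]
        exact hg'mono hx.le
      have := hm (Set.mem_Iic.mpr h) (Set.mem_Iic.mpr le_rfl) h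
      linarith
  have key := hgnonneg (-y)
  have hlog : Real.log (D (-y)) ≤ θ * (-y) + y ^ 2 / 8 := by
    simp only [hg] at key; nlinarith
  have hexp := Real.exp_le_exp.mpr hlog
  rw [Real.exp_log (hDpos (-y))] at hexp
  have e1 : Real.exp ((θ - 1) * y) = Real.exp (θ * y) * Real.exp (-y) := by
    rw [← Real.exp_add]; ring_nf
  calc (1 - θ) * Real.exp (θ * y) + θ * Real.exp ((θ - 1) * y)
      = Real.exp (θ * y) * D (-y) := by rw [e1]; simp only [hD]; ring
    _ ≤ Real.exp (θ * y) * Real.exp (θ * (-y) + y ^ 2 / 8) :=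
        mul_le_mul_of_nonneg_left hexp (Real.exp_pos _).le
    _ = Real.exp (y ^ 2 / 8) := by rw [← Real.exp_add]; congr 1; ring

noncomputable def pmfH (n m k i : ℕ) : ℝ :=
  ((m.choose i : ℝ) * ((n - m).choose (k - i) : ℝ)) / (n.choose k : ℝ)

lemma pmfH_nonneg (n m k i : ℕ) : 0 ≤ pmfH n m k i := by
  unfold pmfH; positivity

lemma real_choose_succ (a k : ℕ) :
    (a.choose (k+1) : ℝ) * (k+1) = (a.choose k : ℝ) * ((a:ℝ) - k) := by
  rcases le_or_gt k a with h | h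
  · have h2 := Nat.choose_succ_right_eq a k
    have h3 : ((a.choose (k+1) * (k+1) : ℕ) : ℝ) = ((a.choose k * (a - k) : ℕ) : ℝ) := by
      rw [h2]
    push_cast [Nat.cast_sub h] at h3
    linarith
  · have h1 : a.choose (k+1) = 0 := Nat.choose_eq_zero_of_lt (by omega)
    have h2 : a.choose k = 0 := Nat.choose_eq_zero_of_lt h
    simp [h1, h2]

lemma choose_cast_ne_zero {a k : ℕ} (h : k ≤ a) : (a.choose k : ℝ) ≠ 0 := by
  exact_mod_cast (Nat.choose_pos h).ne'

lemma pmfH_R1 (n m k : ℕ) (hmn : m ≤ n) (hk : k + 1 ≤ n) :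
    pmfH n m (k+1) 0 = pmfH n m k 0 * ((((n:ℝ)-k) - (m:ℝ)) / ((n:ℝ)-k)) := by
  have hc : ((n:ℝ) - k) ≠ 0 := by
    have : (k:ℝ) + 1 ≤ n := by exact_mod_cast hk
    intro h; linarith
  have e1 := real_choose_succ (n - m) k
  rw [Nat.cast_sub hmn] at e1
  have e2 := real_choose_succ n k
  have hnk : (n.choose k : ℝ) ≠ 0 := choose_cast_ne_zero (by omega)
  have hnk1 : (n.choose (k+1) : ℝ) ≠ 0 := choose_cast_ne_zero hk
  have hk1 : ((k:ℝ) + 1) ≠ 0 := by positivity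
  unfold pmfH
  simp only [Nat.sub_zero, Nat.choose_zero_right, Nat.cast_one, one_mul]
  field_simp
  nlinarith [e1, e2]

lemma pmfH_R3 (n m k : ℕ) (hmn : m ≤ n) (hk : k + 1 ≤ n) :
    pmfH n m (k+1) (k+1) = pmfH n m k k * (((m:ℝ) - k) / ((n:ℝ)-k)) := by
  have hc : ((n:ℝ) - k) ≠ 0 := by
    have : (k:ℝ) + 1 ≤ n := by exact_mod_cast hk
    intro h; linarith
  have e1 := real_choose_succ m k
  have e2 := real_choose_succ n k
  have hnk : (n.choose k : ℝ) ≠ 0 := choose_cast_ne_zero (by omega)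
  have hnk1 : (n.choose (k+1) : ℝ) ≠ 0 := choose_cast_ne_zero hk
  have hk1 : ((k:ℝ) + 1) ≠ 0 := by positivity
  unfold pmfH
  simp only [Nat.sub_self, Nat.choose_zero_right, Nat.cast_one, mul_one]
  field_simp
  nlinarith [e1, e2]

lemma pmfH_R2 (n m k i : ℕ) (hmn : m ≤ n) (hk : k + 1 ≤ n) (hik : i + 1 ≤ k) :
    pmfH n m (k+1) (i+1)
      = pmfH n m k (i+1) * ((((n:ℝ)-k) - ((m:ℝ) - (i+1))) / ((n:ℝ)-k))
        + pmfH n m k i * (((m:ℝ) - i) / ((n:ℝ)-k)) := by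
  have hc : ((n:ℝ) - k) ≠ 0 := by
    have : (k:ℝ) + 1 ≤ n := by exact_mod_cast hk
    intro h; linarith
  set j := k - (i+1) with hj
  have hkj : k - i = j + 1 := by omega
  have hkj2 : (k+1) - (i+1) = j + 1 := by omega
  have hjr : (j:ℝ) = (k:ℝ) - i - 1 := by
    have : (j:ℕ) + (i+1) = k := by omega
    have := congrArg (Nat.cast : ℕ → ℝ) this
    push_cast at this; linarith
  have e1 := real_choose_succ (n - m) j
  rw [Nat.cast_sub hmn, hjr] at e1
  have e2 := real_choose_succ n k
  have e3 := real_choose_succ m i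
  have hnk : (n.choose k : ℝ) ≠ 0 := choose_cast_ne_zero (by omega)
  have hnk1 : (n.choose (k+1) : ℝ) ≠ 0 := choose_cast_ne_zero hk
  have hk1 : ((k:ℝ) + 1) ≠ 0 := by positivity
  have hi1 : ((i:ℝ) + 1) ≠ 0 := by positivity
  unfold pmfH
  rw [hkj, hkj2, show k - (i+1) = j from hj.symm]
  push_cast
  field_simp
  linear_combination (-((m.choose (i+1) : ℝ) * ((n-m).choose (j+1) : ℝ))) * e2
    + ((m.choose (i+1) : ℝ) * (n.choose (k+1) : ℝ)) * e1
    + (((n-m).choose (j+1) : ℝ) * (n.choose (k+1) : ℝ)) * e3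

lemma step_sum (n m k : ℕ) (hmn : m ≤ n) (hk : k + 1 ≤ n) (g : ℕ → ℝ) :
    ∑ i ∈ Finset.range (k+2), pmfH n m (k+1) i * g i
      = ∑ i ∈ Finset.range (k+1), pmfH n m k i *
          (((((n:ℝ)-k) - ((m:ℝ) - i)) / ((n:ℝ)-k)) * g i
            + (((m:ℝ) - i) / ((n:ℝ)-k)) * g (i+1)) := by
  have L : ∑ i ∈ Finset.range (k+2), pmfH n m (k+1) i * g i
      = pmfH n m (k+1) 0 * g 0
        + ((∑ i ∈ Finset.range k, pmfH n m (k+1) (i+1) * g (i+1))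
            + pmfH n m (k+1) (k+1) * g (k+1)) := by
    rw [Finset.sum_range_succ' (fun i => pmfH n m (k+1) i * g i) (k+1),
      Finset.sum_range_succ]
    ring
  have R : ∑ i ∈ Finset.range (k+1), pmfH n m k i *
        (((((n:ℝ)-k) - ((m:ℝ) - i)) / ((n:ℝ)-k)) * g i
          + (((m:ℝ) - i) / ((n:ℝ)-k)) * g (i+1))
      = (pmfH n m k 0 * ((((n:ℝ)-k) - ((m:ℝ) - 0)) / ((n:ℝ)-k)) * g 0
          + ∑ i ∈ Finset.range k,
              pmfH n m k (i+1) * ((((n:ℝ)-k) - ((m:ℝ) - (i+1))) / ((n:ℝ)-k)) * g (i+1))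
        + ((∑ i ∈ Finset.range k, pmfH n m k i * (((m:ℝ) - i) / ((n:ℝ)-k)) * g (i+1))
            + pmfH n m k k * (((m:ℝ) - k) / ((n:ℝ)-k)) * g (k+1)) := by
    have : ∀ i ∈ Finset.range (k+1), pmfH n m k i *
        (((((n:ℝ)-k) - ((m:ℝ) - i)) / ((n:ℝ)-k)) * g i
          + (((m:ℝ) - i) / ((n:ℝ)-k)) * g (i+1))
        = pmfH n m k i * ((((n:ℝ)-k) - ((m:ℝ) - i)) / ((n:ℝ)-k)) * g i
          + pmfH n m k i * (((m:ℝ) - i) / ((n:ℝ)-k)) * g (i+1) := by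
      intro i _; ring
    rw [Finset.sum_congr rfl this, Finset.sum_add_distrib,
      Finset.sum_range_succ' (fun i => pmfH n m k i * ((((n:ℝ)-k) - ((m:ℝ) - i)) / ((n:ℝ)-k)) * g i) k,
      Finset.sum_range_succ (fun i => pmfH n m k i * (((m:ℝ) - i) / ((n:ℝ)-k)) * g (i+1)) k]
    push_cast
    ring
  have hs : ∑ i ∈ Finset.range k, pmfH n m (k+1) (i+1) * g (i+1)
      = ∑ i ∈ Finset.range k,
          (pmfH n m k (i+1) * ((((n:ℝ)-k) - ((m:ℝ) - (i+1))) / ((n:ℝ)-k)) * g (i+1)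
            + pmfH n m k i * (((m:ℝ) - i) / ((n:ℝ)-k)) * g (i+1)) := by
    apply Finset.sum_congr rfl
    intro i hi
    rw [pmfH_R2 n m k i hmn hk (Nat.succ_le_of_lt (Finset.mem_range.mp hi))]
    push_cast; ring
  rw [L, R, pmfH_R1 n m k hmn hk, pmfH_R3 n m k hmn hk, hs, Finset.sum_add_distrib]
  push_cast
  ring

lemma hoeffding_scalar2 (θ y : ℝ) (h0 : 0 ≤ θ) (h1 : θ ≤ 1) :
    (1 - θ) + θ * Real.exp (-y) ≤ Real.exp (-(θ * y)) * Real.exp (y ^ 2 / 8) := by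
  have h := hoeffding_scalar θ y h0 h1
  have key := mul_le_mul_of_nonneg_right h (Real.exp_pos (-(θ * y))).le
  have e1 : Real.exp (θ * y) * Real.exp (-(θ * y)) = 1 := by
    rw [← Real.exp_add]; simp
  have e2 : Real.exp ((θ - 1) * y) * Real.exp (-(θ * y)) = Real.exp (-y) := by
    rw [← Real.exp_add]; congr 1; ring
  have expand : ((1 - θ) * Real.exp (θ * y) + θ * Real.exp ((θ - 1) * y)) * Real.exp (-(θ * y))
      = (1 - θ) * (Real.exp (θ * y) * Real.exp (-(θ * y)))
        + θ * (Real.exp ((θ - 1) * y) * Real.exp (-(θ * y))) := by ring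
  rw [e1, e2, mul_one] at expand
  rw [expand] at key
  linarith [key]

noncomputable def Vsum (n k : ℕ) : ℝ := ∑ j ∈ Finset.range k, (1 / ((n:ℝ) - 1 - j)) ^ 2

lemma pmfH_support {n m k i : ℕ} (h : pmfH n m k i ≠ 0) : i ≤ m ∧ k - i ≤ n - m := by
  constructor
  · by_contra hlt
    rw [pmfH, show m.choose i = 0 from Nat.choose_eq_zero_of_lt (by omega)] at h
    simp at h
  · by_contra hlt
    rw [pmfH, show (n - m).choose (k - i) = 0 from Nat.choose_eq_zero_of_lt (by omega)] at h
    simp at h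

lemma mgf_bound (n m : ℕ) (hmn : m ≤ n) (lam : ℝ) :
    ∀ k, k < n →
      ∑ i ∈ Finset.range (k+1), pmfH n m k i *
          Real.exp (lam * (((k:ℝ) * ((m:ℝ)/n) - i) / ((n:ℝ) - k)))
        ≤ Real.exp (lam ^ 2 / 8 * Vsum n k) := by
  intro k
  induction k with
  | zero =>
    intro _
    simp [pmfH, Vsum]
  | succ k ih =>
    intro hkn
    have hkn' : k < n := by omega
    have hk1n : k + 1 ≤ n := by omega
    have hnR : (0:ℝ) < n := by
      have : 0 < n := by omega
      exact_mod_cast this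
    set c : ℝ := (n:ℝ) - k with hcdef
    set d : ℝ := (n:ℝ) - ((k+1 : ℕ):ℝ) with hddef
    have hdpos : 0 < d := by
      have : ((k:ℝ) + 1) + 1 ≤ n := by exact_mod_cast hkn
      simp only [hddef]; push_cast; linarith
    have hcd : c = d + 1 := by simp only [hcdef, hddef]; push_cast; ring
    have hcpos : 0 < c := by linarith
    set g : ℕ → ℝ := fun i =>
      Real.exp (lam * ((((k+1 : ℕ):ℝ) * ((m:ℝ)/n) - i) / ((n:ℝ) - ((k+1 : ℕ):ℝ)))) with hgdef
    have hstep := step_sum n m k hmn (le_of_lt hkn) g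
    have hmain : ∑ i ∈ Finset.range (k+1+1), pmfH n m (k+1) i * g i
        ≤ Real.exp (lam ^ 2 / 8 * Vsum n (k+1)) := by
      rw [hstep]
      set E : ℝ := Real.exp (lam ^ 2 / 8 * (1/d) ^ 2) with hEdef
      have hterm : ∀ i ∈ Finset.range (k+1),
          pmfH n m k i * (((c - ((m:ℝ) - i)) / c) * g i + (((m:ℝ) - i) / c) * g (i+1))
            ≤ pmfH n m k i * Real.exp (lam * (((k:ℝ) * ((m:ℝ)/n) - i) / ((n:ℝ) - k))) * E := by
        intro i hi
        have hik : i ≤ k := by exact Nat.lt_succ_iff.mp (Finset.mem_range.mp hi)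
        rcases eq_or_ne (pmfH n m k i) 0 with hP | hP
        · rw [hP]; simp [hEdef, Real.exp_pos]
        · have hPpos : 0 < pmfH n m k i := lt_of_le_of_ne (pmfH_nonneg n m k i) (Ne.symm hP)
          obtain ⟨him, hki⟩ := pmfH_support hP
          set θ : ℝ := ((m:ℝ) - i) / c with hθdef
          have hθ0 : 0 ≤ θ := by
            apply div_nonneg _ hcpos.le
            have : (i:ℝ) ≤ m := by exact_mod_cast him
            linarith
          have hθ1 : θ ≤ 1 := by
            rw [hθdef, div_le_one hcpos]
            have hnat : m + k ≤ n + i := by omega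
            have : (m:ℝ) + k ≤ (n:ℝ) + i := by exact_mod_cast hnat
            simp only [hcdef]; linarith
          have hg1 : g (i+1) = g i * Real.exp (-(lam/d)) := by
            rw [hgdef]
            simp only
            rw [← Real.exp_add]
            congr 1
            have hd0 : ((n:ℝ) - ((k+1:ℕ):ℝ)) ≠ 0 := ne_of_gt hdpos
            rw [show ((n:ℝ) - ((k+1:ℕ):ℝ)) = d from rfl]
            have hd0' : d ≠ 0 := ne_of_gt hdpos
            push_cast
            field_simp
            ring
          have hA : (c - ((m:ℝ) - i)) / c = 1 - θ := by
            rw [hθdef]; field_simp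
          have hmean : lam * (((k:ℝ) * ((m:ℝ)/n) - i) / ((n:ℝ) - k))
              = lam * ((((k:ℝ)+1) * ((m:ℝ)/n) - i) / d) - θ * (lam/d) := by
            rw [hθdef]
            simp only [hcdef, hddef]
            push_cast
            have h1 : ((n:ℝ) - k) ≠ 0 := by linarith [hcd, hdpos]
            have h2 : ((n:ℝ) - ((k:ℝ)+1)) ≠ 0 := by
              simp only [hddef] at hdpos; push_cast at hdpos; linarith
            field_simp
            ring
          have hbr : ((c - ((m:ℝ) - i)) / c) * g i + (((m:ℝ) - i) / c) * g (i+1)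
              = g i * ((1 - θ) + θ * Real.exp (-(lam/d))) := by
            rw [hA, hg1, hθdef]; ring
          have hhs := hoeffding_scalar2 θ (lam/d) hθ0 hθ1
          have hgnn : 0 ≤ g i := by rw [hgdef]; exact (Real.exp_pos _).le
          have hchain : pmfH n m k i * (((c - ((m:ℝ) - i)) / c) * g i + (((m:ℝ) - i) / c) * g (i+1))
              ≤ pmfH n m k i * (g i * (Real.exp (-(θ * (lam/d))) * Real.exp ((lam/d) ^ 2 / 8))) := by
            rw [hbr]
            exact mul_le_mul_of_nonneg_left (mul_le_mul_of_nonneg_left hhs hgnn) (pmfH_nonneg n m k i)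
          refine hchain.trans (le_of_eq ?_)
          have e1 : g i * (Real.exp (-(θ * (lam/d))) * Real.exp ((lam/d) ^ 2 / 8))
              = Real.exp (lam * ((((k+1:ℕ):ℝ) * ((m:ℝ)/n) - i) / ((n:ℝ) - ((k+1:ℕ):ℝ)))
                  + (-(θ * (lam/d)) + (lam/d) ^ 2 / 8)) := by
            rw [hgdef]; simp only; rw [← Real.exp_add, ← Real.exp_add]
          have e2 : Real.exp (lam * (((k:ℝ) * ((m:ℝ)/n) - i) / ((n:ℝ) - k))) * E
              = Real.exp (lam * (((k:ℝ) * ((m:ℝ)/n) - i) / ((n:ℝ) - k)) + lam ^ 2 / 8 * (1/d) ^ 2) := by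
            rw [hEdef, ← Real.exp_add]
          rw [e1, mul_assoc, e2]
          congr 1
          rw [hmean, hddef]
          push_cast
          ring
      calc ∑ i ∈ Finset.range (k+1), pmfH n m k i *
            (((c - ((m:ℝ) - i)) / c) * g i + (((m:ℝ) - i) / c) * g (i+1))
          ≤ ∑ i ∈ Finset.range (k+1),
              pmfH n m k i * Real.exp (lam * (((k:ℝ) * ((m:ℝ)/n) - i) / ((n:ℝ) - k))) * E :=
            Finset.sum_le_sum hterm
        _ = (∑ i ∈ Finset.range (k+1),
              pmfH n m k i * Real.exp (lam * (((k:ℝ) * ((m:ℝ)/n) - i) / ((n:ℝ) - k)))) * E := by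
            rw [Finset.sum_mul]
        _ ≤ Real.exp (lam ^ 2 / 8 * Vsum n k) * E := by
            apply mul_le_mul_of_nonneg_right (ih hkn') (Real.exp_pos _).le
        _ = Real.exp (lam ^ 2 / 8 * Vsum n (k+1)) := by
            rw [hEdef, ← Real.exp_add,
              show Vsum n (k+1) = Vsum n k + (1/((n:ℝ)-1-(k:ℕ)))^2 from Finset.sum_range_succ _ k]
            congr 1
            rw [hddef]
            push_cast
            ring
    exact hmain

lemma Vsum_pos (n k : ℕ) (hk1 : 1 ≤ k) (hkn : k < n) : 0 < Vsum n k := by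
  apply Finset.sum_pos
  · intro j hj
    have hj' : j < k := Finset.mem_range.mp hj
    have : (j:ℝ) + 1 ≤ (n:ℝ) - 1 := by
      have : j + 2 ≤ n := by omega
      have := (Nat.cast_le (α := ℝ)).mpr this
      push_cast at this
      linarith
    have hne : ((n:ℝ) - 1 - j) ≠ 0 := by linarith
    positivity
  · exact ⟨0, Finset.mem_range.mpr (by omega)⟩

lemma Vsum_le (n : ℕ) : ∀ k, 1 ≤ k → k < n →
    ((n:ℝ) - k) ^ 2 * Vsum n k ≤ (k:ℝ) * (((n:ℝ) - k) + 1) / n := by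
  intro k
  induction k with
  | zero => omega
  | succ k ih =>
    intro _ hkn
    rcases Nat.eq_zero_or_pos k with rfl | hk
    · have hn2 : 2 ≤ n := by omega
      have hnR : (2:ℝ) ≤ n := by exact_mod_cast hn2
      have hne : ((n:ℝ) - 1) ≠ 0 := by push_cast; linarith
      have hn0 : (n:ℝ) ≠ 0 := by linarith
      rw [Vsum]
      push_cast
      rw [Finset.sum_range_one]
      push_cast
      field_simp
      rw [sub_zero, mul_div_assoc, div_self (pow_ne_zero 2 hne)]; linarith
    · have hkn' : k < n := by omega
      have IH := ih hk hkn'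
      set a : ℝ := (n:ℝ) - k with hadef
      have ha2 : (2:ℝ) ≤ a := by
        have : k + 2 ≤ n := by omega
        have := (Nat.cast_le (α := ℝ)).mpr this
        push_cast at this
        simp only [hadef]; linarith
      have hnk : (n:ℝ) = (k:ℝ) + a := by simp only [hadef]; ring
      have hnpos : (0:ℝ) < n := by
        have : 0 < n := by omega
        exact_mod_cast this
      have hkpos : (1:ℝ) ≤ k := by exact_mod_cast hk
      have hV : Vsum n (k+1) = Vsum n k + (1/((n:ℝ) - 1 - k)) ^ 2 :=
        Finset.sum_range_succ _ k
      have hcast : ((n:ℝ) - ((k:ℕ)+1:ℕ)) = a - 1 := by push_cast; simp only [hadef]; ring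
      push_cast
      have h1 : ((n:ℝ) - ((k:ℝ)+1)) = a - 1 := by simp only [hadef]; ring
      rw [h1, hV]
      have h2 : ((n:ℝ) - 1 - k) = a - 1 := by simp only [hadef]; ring
      rw [h2]
      have hane : a - 1 ≠ 0 := by linarith
      -- (a-1)^2 * (Vsum n k + 1/(a-1)^2) = (a-1)^2 * Vsum n k + 1
      have expand : (a-1)^2 * (Vsum n k + (1/(a-1))^2) = (a-1)^2 * Vsum n k + 1 := by
        field_simp
      rw [expand]
      -- (a-1)^2 * Vsum n k ≤ (a-1)^2/a^2 * (k*(a+1)/n)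
      have hVk : Vsum n k ≤ (k:ℝ) * (a + 1) / n / a ^ 2 := by
        rw [le_div_iff₀ (by positivity)]
        calc Vsum n k * a ^ 2 = a ^ 2 * Vsum n k := by ring
          _ ≤ (k:ℝ) * (a + 1) / n := IH
      have step1 : (a-1)^2 * Vsum n k + 1 ≤ (a-1)^2 * ((k:ℝ) * (a + 1) / n / a ^ 2) + 1 := by
        nlinarith [sq_nonneg (a-1), hVk]
      apply step1.trans
      have key : (k:ℝ) * (a+1) * (a-1)^2 + ((k:ℝ) + a) * a^2 ≤ ((k:ℝ)+1) * a^3 := by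
        nlinarith [mul_nonneg (by linarith : (0:ℝ) ≤ (k:ℝ)) (by linarith : (0:ℝ) ≤ a - 1)]
      have hna : (n:ℝ) * a^2 = ((k:ℝ)+a) * a^2 := by rw [hnk]
      have final : (a-1)^2 * ((k:ℝ) * (a + 1) / n / a ^ 2) + 1 ≤ ((k:ℝ)+1) * (a - 1 + 1) / n := by
        rw [← sub_nonneg]
        have expand2 : ((k:ℝ)+1) * (a - 1 + 1) / n - ((a-1)^2 * ((k:ℝ) * (a + 1) / n / a ^ 2) + 1)
            = (((k:ℝ)+1) * a^3 - ((k:ℝ) * (a+1) * (a-1)^2 + (n:ℝ) * a^2)) / ((n:ℝ) * a^2) := by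
          field_simp
          ring
        rw [expand2]
        apply div_nonneg _ (by positivity)
        linarith [key, hna]
      exact final

open Classical in
lemma tail_gen (n m k : ℕ) (hmn : m ≤ n) (hkn : k < n) (E : ℕ → Prop)
    (lam t : ℝ)
    (hcond : ∀ i ∈ Finset.range (k+1), E i →
      0 ≤ lam * (((k:ℝ) * ((m:ℝ)/n) - i) / ((n:ℝ) - k)) - lam * t) :
    (∑ i ∈ Finset.range (k+1), if E i then pmfH n m k i else 0)
      ≤ Real.exp (-(lam * t)) * Real.exp (lam ^ 2 / 8 * Vsum n k) := by
  have h1 : ∀ i ∈ Finset.range (k+1), (if E i then pmfH n m k i else 0)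
      ≤ pmfH n m k i * Real.exp (lam * (((k:ℝ) * ((m:ℝ)/n) - i) / ((n:ℝ) - k))) * Real.exp (-(lam * t)) := by
    intro i hi
    split_ifs with h
    · rw [mul_assoc, ← Real.exp_add]
      nth_rewrite 1 [← mul_one (pmfH n m k i)]
      apply mul_le_mul_of_nonneg_left _ (pmfH_nonneg n m k i)
      apply Real.one_le_exp
      have := hcond i hi h
      linarith
    · exact mul_nonneg (mul_nonneg (pmfH_nonneg n m k i) (Real.exp_pos _).le) (Real.exp_pos _).le
  calc (∑ i ∈ Finset.range (k+1), if E i then pmfH n m k i else 0)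
      ≤ ∑ i ∈ Finset.range (k+1), pmfH n m k i *
          Real.exp (lam * (((k:ℝ) * ((m:ℝ)/n) - i) / ((n:ℝ) - k))) * Real.exp (-(lam * t)) :=
        Finset.sum_le_sum h1
    _ = (∑ i ∈ Finset.range (k+1), pmfH n m k i *
          Real.exp (lam * (((k:ℝ) * ((m:ℝ)/n) - i) / ((n:ℝ) - k)))) * Real.exp (-(lam * t)) := by
        rw [Finset.sum_mul]
    _ ≤ Real.exp (lam ^ 2 / 8 * Vsum n k) * Real.exp (-(lam * t)) :=
        mul_le_mul_of_nonneg_right (mgf_bound n m hmn lam k hkn) (Real.exp_pos _).le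
    _ = _ := mul_comm _ _

open Classical in
lemma tail_lower (n m k : ℕ) (hmn : m ≤ n) (hk1 : 1 ≤ k) (hkn : k < n) (E : ℕ → Prop)
    (s : ℝ) (hs : 0 ≤ s)
    (hE : ∀ i ∈ Finset.range (k+1), E i → s ≤ ((k:ℝ) * ((m:ℝ)/n) - i) / ((n:ℝ) - k)) :
    (∑ i ∈ Finset.range (k+1), if E i then pmfH n m k i else 0)
      ≤ Real.exp (-(2 * s ^ 2 / Vsum n k)) := by
  have hV := Vsum_pos n k hk1 hkn
  set lam : ℝ := 4 * s / Vsum n k with hlam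
  have hlam0 : 0 ≤ lam := by positivity
  have h := tail_gen n m k hmn hkn E lam s ?_
  · refine h.trans (le_of_eq ?_)
    rw [← Real.exp_add]
    congr 1
    rw [hlam]
    field_simp
    ring
  · intro i hi hEi
    have := hE i hi hEi
    nlinarith

open Classical in
lemma tail_upper (n m k : ℕ) (hmn : m ≤ n) (hk1 : 1 ≤ k) (hkn : k < n) (E : ℕ → Prop)
    (s : ℝ) (hs : 0 ≤ s)
    (hE : ∀ i ∈ Finset.range (k+1), E i → ((k:ℝ) * ((m:ℝ)/n) - i) / ((n:ℝ) - k) ≤ -s) :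
    (∑ i ∈ Finset.range (k+1), if E i then pmfH n m k i else 0)
      ≤ Real.exp (-(2 * s ^ 2 / Vsum n k)) := by
  have hV := Vsum_pos n k hk1 hkn
  set lam : ℝ := -(4 * s / Vsum n k) with hlam
  have hlam0 : lam ≤ 0 := by
    rw [hlam]
    have : 0 ≤ 4 * s / Vsum n k := by positivity
    linarith
  have h := tail_gen n m k hmn hkn E lam (-s) ?_
  · refine h.trans (le_of_eq ?_)
    rw [← Real.exp_add]
    congr 1
    rw [hlam]
    field_simp
    ring
  · intro i hi hEi
    have h2 := hE i hi hEi
    have h3 := mul_nonneg (neg_nonneg.mpr hlam0)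
      (by linarith : (0:ℝ) ≤ -s - (((k:ℝ) * ((m:ℝ)/n) - i) / ((n:ℝ) - k)))
    nlinarith

lemma pmfH_sym (n m k i : ℕ) (hmn : m ≤ n) (hkn : k ≤ n) (him : i ≤ m) (hik : i ≤ k)
    (hki : k - i ≤ n - m) : pmfH n m k i = pmfH n m (n-k) (m-i) := by
  have e1 : n.choose (n-k) = n.choose k := Nat.choose_symm hkn
  have e2 : m.choose (m-i) = m.choose i := Nat.choose_symm him
  have e3 : (n-k) - (m-i) = (n-m) - (k-i) := by omega
  have e4 : (n-m).choose ((n-m)-(k-i)) = (n-m).choose (k-i) := Nat.choose_symm hki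
  unfold pmfH
  rw [e1, e2, e3, e4]

open Classical in
lemma sum_sym (n m k : ℕ) (hmn : m ≤ n) (hkn : k ≤ n) (E : ℕ → Prop) :
    (∑ i ∈ Finset.range (k+1), if E i then pmfH n m k i else 0)
      = ∑ j ∈ Finset.range ((n-k)+1), if E (m-j) then pmfH n m (n-k) j else 0 := by
  have hL : (∑ i ∈ Finset.range (k+1), if E i then pmfH n m k i else 0)
      = ∑ i ∈ (Finset.range (k+1)).filter (fun i => pmfH n m k i ≠ 0),
          if E i then pmfH n m k i else 0 := by
    rw [Finset.sum_filter_of_ne]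
    intro i _ hne
    split_ifs at hne with h
    · exact fun hp => hne (by rw [hp])
    · exact absurd rfl hne
  have hR : (∑ j ∈ Finset.range ((n-k)+1), if E (m-j) then pmfH n m (n-k) j else 0)
      = ∑ j ∈ (Finset.range ((n-k)+1)).filter (fun j => pmfH n m (n-k) j ≠ 0),
          if E (m-j) then pmfH n m (n-k) j else 0 := by
    rw [Finset.sum_filter_of_ne]
    intro j _ hne
    split_ifs at hne with h
    · exact fun hp => hne (by rw [hp])
    · exact absurd rfl hne
  rw [hL, hR]
  apply Finset.sum_nbij' (fun i => m - i) (fun j => m - j)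
  · intro i hi
    simp only [Finset.mem_filter, Finset.mem_range] at hi ⊢
    obtain ⟨hir, hne⟩ := hi
    obtain ⟨him, hki⟩ := pmfH_support hne
    have hik : i ≤ k := by omega
    constructor
    · omega
    · rw [← pmfH_sym n m k i hmn hkn him hik hki]
      exact hne
  · intro j hj
    simp only [Finset.mem_filter, Finset.mem_range] at hj ⊢
    obtain ⟨hjr, hne⟩ := hj
    obtain ⟨hjm, hkj⟩ := pmfH_support hne
    have hjk : j ≤ n - k := by omega
    constructor
    · omega
    · have h1 : m - j ≤ m := by omega
      have h2 : m - j ≤ k := by omega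
      have h3 : k - (m - j) ≤ n - m := by omega
      rw [pmfH_sym n m k (m-j) hmn hkn h1 h2 h3, show m - (m - j) = j by omega]
      exact hne
  · intro i hi
    simp only [Finset.mem_filter, Finset.mem_range] at hi
    obtain ⟨hir, hne⟩ := hi
    obtain ⟨him, hki⟩ := pmfH_support hne
    omega
  · intro j hj
    simp only [Finset.mem_filter, Finset.mem_range] at hj
    obtain ⟨hjr, hne⟩ := hj
    obtain ⟨hjm, hkj⟩ := pmfH_support hne
    omega
  · intro i hi
    simp only [Finset.mem_filter, Finset.mem_range] at hi
    obtain ⟨hir, hne⟩ := hi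
    obtain ⟨him, hki⟩ := pmfH_support hne
    have hik : i ≤ k := by omega
    rw [show m - (m - i) = i by omega, ← pmfH_sym n m k i hmn hkn him hik hki]



open Classical in
/-- Probability that a hypergeometric random variable (number of "satisfying" rows among
`k` rows drawn uniformly at random without replacement from `n` rows of which `m` satisfy
the predicate) satisfies `P`. -/
noncomputable def hyperProb (n m k : ℕ) (P : ℕ → Prop) : ℝ :=
  ∑ i ∈ Finset.range (k + 1),
    if P i then ((m.choose i : ℝ) * ((n - m).choose (k - i) : ℝ)) / (n.choose k : ℝ) else 0

open Classical in
/-- The factor ρ from the Hoeffding–Serfling/Bernstein–Serfling inequalities. -/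
noncomputable def rho (n k : ℕ) : ℝ :=
  if (k : ℝ) ≤ (n : ℝ) / 2 then 1 - ((k : ℝ) - 1) / n
  else (1 - (k : ℝ) / n) * (1 + 1 / (k : ℝ))

open Classical in
/-- The factor ζ from the Bernstein–Serfling inequality. -/
noncomputable def zeta (n k : ℕ) : ℝ :=
  if (k : ℝ) ≤ (n : ℝ) / 2 then
    4 / 3 + Real.sqrt ((k * ((k : ℝ) - 1)) / (n * ((n : ℝ) - k + 1)))
  else
    4 / 3 + Real.sqrt ((((n : ℝ) - k - 1) * ((n : ℝ) - k)) / (((k : ℝ) + 1) * n))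

theorem hoeffding_serfling_underestimation (n m k : ℕ) (hn : 2 ≤ n) (hm0 : 0 < m) (hmn : m ≤ n)
    (hk1 : 1 ≤ k) (hkn : k < n) (p : ℝ) (hp : p = (m : ℝ) / n) (q : ℝ) (hq : 1 ≤ q) :
    hyperProb n m k (fun i => (i : ℝ) < k * p / q) ≤
      Real.exp (-(2 * k * (p - p / q) ^ 2) / rho n k) := by
  classical
  have hnR : (0:ℝ) < n := by exact_mod_cast (by omega : 0 < n)
  have hkR : (1:ℝ) ≤ k := by exact_mod_cast hk1
  have hknR : (k:ℝ) < n := by exact_mod_cast hkn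
  have hq0 : (0:ℝ) < q := by linarith
  have hp0 : 0 < p := by rw [hp]; positivity
  have hp1 : p ≤ 1 := by
    rw [hp, div_le_one hnR]; exact_mod_cast hmn
  set t : ℝ := p - p / q with htdef
  have ht0 : 0 ≤ t := by
    have : p / q ≤ p := div_le_self hp0.le hq
    simp only [htdef]; linarith
  have htp : t ≤ p := by
    have : 0 < p / q := by positivity
    simp only [htdef]; linarith
  have hEsum : hyperProb n m k (fun i => (i : ℝ) < k * p / q)
      = ∑ i ∈ Finset.range (k+1),
          if ((i:ℝ) < k * p / q) then pmfH n m k i else 0 := rfl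
  -- key: the event implies deviation
  by_cases hcase : (k : ℝ) ≤ (n : ℝ) / 2
  · -- direct lower-tail bound
    have hrho : rho n k = ((n:ℝ) - k + 1) / n := by
      rw [rho, if_pos hcase]
      field_simp
      ring
    have hrhopos : 0 < rho n k := by
      rw [hrho]; apply div_pos (by linarith) hnR
    set s : ℝ := (k:ℝ) * t / ((n:ℝ) - k) with hsdef
    have hs0 : 0 ≤ s := by
      apply div_nonneg (by positivity) (by linarith)
    have hV := Vsum_pos n k hk1 hkn
    have htail := tail_lower n m k hmn hk1 hkn (fun i => (i:ℝ) < k * p / q) s hs0 ?_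
    · rw [hEsum]
      refine htail.trans ?_
      rw [Real.exp_le_exp]
      have HS := Vsum_le n k hk1 hkn
      rw [show ((k:ℝ) * (((n:ℝ) - k) + 1) / n) = (k:ℝ) * rho n k from by rw [hrho]; ring] at HS
      rw [show (-(2 * (k:ℝ) * t ^ 2) / rho n k) = -(2 * (k:ℝ) * t ^ 2 / rho n k) from by ring]
      rw [neg_le_neg_iff, div_le_div_iff₀ hrhopos hV]
      have h1 : 2 * (k:ℝ) * t^2 * (((n:ℝ)-k)^2 * Vsum n k) ≤ 2 * (k:ℝ) * t^2 * ((k:ℝ) * rho n k) :=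
        mul_le_mul_of_nonneg_left HS (by positivity)
      have hnk2 : (0:ℝ) < ((n:ℝ) - k)^2 := by
        have : (0:ℝ) < (n:ℝ) - k := by linarith
        positivity
      rw [hsdef]
      rw [div_pow, mul_pow]
      have expand : 2 * ((k:ℝ)^2 * t^2 / ((n:ℝ)-k)^2) * rho n k
          = (2 * (k:ℝ) * t^2 * ((k:ℝ) * rho n k)) / ((n:ℝ)-k)^2 := by ring
      rw [expand, le_div_iff₀ hnk2]
      calc 2 * (k:ℝ) * t ^ 2 * Vsum n k * ((n:ℝ) - k)^2
          = 2 * (k:ℝ) * t^2 * (((n:ℝ)-k)^2 * Vsum n k) := by ring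
        _ ≤ _ := h1
    · intro i _ hEi
      have hnum : (k:ℝ) * t ≤ (k:ℝ) * ((m:ℝ)/n) - i := by
        rw [← hp]
        have e : (k:ℝ) * t = k * p - k * p / q := by rw [htdef]; ring
        rw [e]
        linarith [hEi]
      rw [hsdef]
      exact (div_le_div_iff_of_pos_right (by linarith)).mpr hnum
  · -- complement trick: upper tail for sample size n - k
    have hrho : rho n k = (((n:ℝ) - k) / n) * (((k:ℝ) + 1) / k) := by
      rw [rho, if_neg hcase]
      field_simp
    have hrhopos : 0 < rho n k := by
      rw [hrho]
      apply mul_pos (div_pos (by linarith) hnR) (div_pos (by linarith) (by linarith))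
    set k' : ℕ := n - k with hk'def
    have hk'1 : 1 ≤ k' := by omega
    have hk'n : k' < n := by omega
    have hk'R : ((k':ℕ):ℝ) = (n:ℝ) - k := by
      rw [hk'def, Nat.cast_sub hkn.le]
    have hsym := sum_sym n m k hmn hkn.le (fun i => (i : ℝ) < k * p / q)
    have hV := Vsum_pos n k' hk'1 hk'n
    have htail := tail_upper n m k' hmn hk'1 hk'n (fun j => ((m - j : ℕ):ℝ) < k * p / q) t ht0 ?_
    · rw [hEsum, hsym]
      refine le_trans (le_of_eq ?_) (htail.trans ?_)
      · rfl
      rw [Real.exp_le_exp]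
      have HS := Vsum_le n k' hk'1 hk'n
      rw [hk'R] at HS
      have hnn : ((n:ℝ) - ((n:ℝ) - k)) = k := by ring
      rw [hnn] at HS
      -- HS : k^2 * Vsum n k' ≤ (n-k) * (k+1) / n  ... i.e. ((n:ℝ)-k') = k
      -- goal : -(2*t^2/Vsum n k') ≤ -(2*k*t^2)/rho n k
      rw [show (-(2 * (k:ℝ) * t ^ 2) / rho n k) = -(2 * (k:ℝ) * t ^ 2 / rho n k) from by ring]
      rw [neg_le_neg_iff, div_le_div_iff₀ hrhopos hV]
      -- 2*k*t^2 * Vsum n k' ≤ 2*t^2 * rho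
      have hkpos : (0:ℝ) < k := by linarith
      have h1 : 2 * t^2 * ((k:ℝ)^2 * Vsum n k') ≤ 2 * t^2 * (((n:ℝ)-k) * ((k:ℝ)+1) / n) :=
        mul_le_mul_of_nonneg_left HS (by positivity)
      have hrok : rho n k * k = ((n:ℝ)-k) * ((k:ℝ)+1) / n := by
        rw [hrho]; field_simp
      have hrok2 : 2*t^2*(rho n k * k) = 2*t^2*(((n:ℝ)-k) * ((k:ℝ)+1)/n) := by rw [hrok]
      rw [← mul_le_mul_iff_left₀ hkpos]
      calc 2 * (k:ℝ) * t^2 * Vsum n k' * k = 2*t^2*((k:ℝ)^2 * Vsum n k') := by ring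
        _ ≤ 2*t^2*(((n:ℝ)-k) * ((k:ℝ)+1) / n) := h1
        _ = 2*t^2*(rho n k * k) := hrok2.symm
        _ = 2*t^2* rho n k * k := by ring
    · intro j hj hEj
      have hjm : (m:ℝ) - j ≤ ((m - j : ℕ):ℝ) := by
        rcases le_or_gt j m with h | h
        · rw [Nat.cast_sub h]
        · have : ((m - j : ℕ):ℝ) = 0 := by
            rw [Nat.sub_eq_zero_of_le h.le]; simp
          rw [this]
          have : (m:ℝ) ≤ j := by exact_mod_cast h.le
          linarith
      have hjlow : (m:ℝ) - j < k * p / q := lt_of_le_of_lt hjm hEj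
      have hkpos' : (0:ℝ) < k := by linarith
      have hnn' : (n:ℝ) - ((k':ℕ):ℝ) = (k:ℝ) := by rw [hk'R]; ring
      rw [hnn', hk'R, ← hp, div_le_iff₀ hkpos']
      have hmnp : (m:ℝ) = n * p := by rw [hp]; field_simp
      rw [hmnp] at hjlow
      simp only [htdef]
      have hexpand : ((n:ℝ) - k) * p - (j:ℝ) - (-(p - p/q) * k) = ((n:ℝ) * p - j) - (k:ℝ) * p / q := by
        ring
      linarith [hjlow, hexpand]
end

section
/- Bound 3: For every population of n ≥ 2 rows of which m satisfy a predicate (0 < m ≤ n, p = m/n), every sample size 1 ≤ k < n, and every real q ≥ 1, the hypergeometric random variable X̂ counting satisfying rows among k rows drawn uniformly without replacement satisfies P(k·p/q ≤ X̂ ≤ q·k·p) ≥ 1 − exp(−2k·(pq−p)²/ρ) − exp(−2k·(p−p/q)²/ρ). (Q-error bound from the Hoeffding–Serfling inequality for uniform sampling without replacement.) -/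
open Finset


noncomputable def hw (n m k i : ℕ) : ℝ :=
  ((m.choose i : ℝ) * ((n - m).choose (k - i) : ℝ)) / (n.choose k : ℝ)

lemma hw_nonneg (n m k i : ℕ) : 0 ≤ hw n m k i := by
  unfold hw; positivity

lemma bern_pos (g u : ℝ) (h0 : 0 ≤ g) (h1 : g ≤ 1) : 0 < 1 - g + g * Real.exp u := by
  rcases eq_or_lt_of_le h1 with h | h
  · rw [h]; simpa using Real.exp_pos u
  · nlinarith [Real.exp_pos u, mul_nonneg h0 (Real.exp_pos u).le]

lemma bern_mgf_nonneg (g : ℝ) (h0 : 0 ≤ g) (h1 : g ≤ 1) (u : ℝ) (hu : 0 ≤ u) :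
    1 - g + g * Real.exp u ≤ Real.exp (g * u + u ^ 2 / 8) := by
  set D : ℝ → ℝ := fun x => 1 - g + g * Real.exp x with hDdef
  have hDpos : ∀ x, 0 < D x := fun x => bern_pos g x h0 h1
  have hD' : ∀ x, HasDerivAt D (g * Real.exp x) x := by
    intro x
    exact ((Real.hasDerivAt_exp x).const_mul g).const_add (1 - g)
  set φ1 : ℝ → ℝ := fun x => g + x / 4 - g * Real.exp x / D x with hφ1def
  have hφ1' : ∀ x, HasDerivAt φ1 (1 / 4 - g * Real.exp x * (1 - g) / (D x) ^ 2) x := by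
    intro x
    have h2 : HasDerivAt (fun x => g * Real.exp x / D x)
        ((g * Real.exp x * D x - g * Real.exp x * (g * Real.exp x)) / (D x) ^ 2) x :=
      ((Real.hasDerivAt_exp x).const_mul g).div (hD' x) (hDpos x).ne'
    have h3 : HasDerivAt (fun x : ℝ => g + x / 4) (1 / 4) x := by
      simpa using ((hasDerivAt_id x).div_const 4).const_add g
    have h4 := h3.sub h2
    refine h4.congr_deriv ?_
    have : D x = 1 - g + g * Real.exp x := rfl
    rw [this]; ring
  have hφ1mono : Monotone φ1 :=
    monotone_of_deriv_nonneg (fun x => (hφ1' x).differentiableAt)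
      (by
        intro x
        rw [(hφ1' x).deriv]
        have hA : (0:ℝ) ≤ 1 - g := by linarith
        have hB : (0:ℝ) ≤ g * Real.exp x := mul_nonneg h0 (Real.exp_pos x).le
        have hD : D x = (1 - g) + g * Real.exp x := rfl
        have h4 : 4 * (g * Real.exp x * (1 - g)) ≤ (D x) ^ 2 := by
          rw [hD]; nlinarith [sq_nonneg ((1 - g) - g * Real.exp x)]
        have hd2 : (0:ℝ) < D x ^ 2 := pow_pos (hDpos x) 2
        rw [sub_nonneg, div_le_iff₀ hd2]
        nlinarith [h4, hd2])
  have hφ10 : φ1 0 = 0 := by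
    simp [hφ1def, hDdef, Real.exp_zero]
  set φ : ℝ → ℝ := fun x => g * x + x ^ 2 / 8 - Real.log (D x) with hφdef
  have hφ' : ∀ x, HasDerivAt φ (φ1 x) x := by
    intro x
    have hlog : HasDerivAt (fun x => Real.log (D x)) (g * Real.exp x / D x) x :=
      (hD' x).log (hDpos x).ne'
    have hpoly : HasDerivAt (fun x : ℝ => g * x + x ^ 2 / 8) (g + x / 4) x := by
      have := ((hasDerivAt_pow 2 x).div_const 8).const_add (g * x)
      have h5 : HasDerivAt (fun y : ℝ => g * y) g x := by
        simpa using (hasDerivAt_id x).const_mul g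
      exact (h5.add ((hasDerivAt_pow 2 x).div_const 8)).congr_deriv (by norm_num <;> ring)
    exact hpoly.sub hlog
  have hφmono : MonotoneOn φ (Set.Ici (0:ℝ)) := by
    apply monotoneOn_of_deriv_nonneg (convex_Ici 0)
    · exact (Differentiable.continuous (fun x => (hφ' x).differentiableAt)).continuousOn
    · exact fun x _ => (hφ' x).differentiableAt.differentiableWithinAt
    · intro x hx
      rw [interior_Ici] at hx
      rw [(hφ' x).deriv]
      have := hφ1mono (le_of_lt hx)
      rw [hφ10] at this; exact this
  have hφ0 : φ 0 = 0 := by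
    simp [hφdef, hDdef, Real.exp_zero]
  have hφu : 0 ≤ φ u := by
    have := hφmono (Set.self_mem_Ici) (Set.mem_Ici.mpr hu) hu
    rw [hφ0] at this; exact this
  have hlog : Real.log (D u) ≤ g * u + u ^ 2 / 8 := by
    simp only [hφdef] at hφu; linarith
  calc D u = Real.exp (Real.log (D u)) := (Real.exp_log (hDpos u)).symm
    _ ≤ Real.exp (g * u + u ^ 2 / 8) := Real.exp_le_exp.mpr hlog

lemma bern_mgf (g : ℝ) (h0 : 0 ≤ g) (h1 : g ≤ 1) (u : ℝ) :
    1 - g + g * Real.exp u ≤ Real.exp (g * u + u ^ 2 / 8) := by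
  rcases le_or_gt 0 u with hu | hu
  · exact bern_mgf_nonneg g h0 h1 u hu
  · have h := bern_mgf_nonneg (1 - g) (by linarith) (by linarith) (-u) (by linarith)
    have hE := Real.exp_pos u
    have h2 := mul_le_mul_of_nonneg_left h hE.le
    calc 1 - g + g * Real.exp u
        = Real.exp u * (1 - (1 - g) + (1 - g) * Real.exp (-u)) := by
          rw [Real.exp_neg]
          field_simp
          ring
      _ ≤ Real.exp u * Real.exp ((1 - g) * (-u) + (-u) ^ 2 / 8) := h2
      _ = Real.exp (g * u + u ^ 2 / 8) := by
          rw [← Real.exp_add]; ring_nf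

lemma sum_inv_sq_le (a : ℕ) (ha : 1 ≤ a) : ∀ b : ℕ, a ≤ b →
    ∑ j ∈ Finset.Ico a b, (1 : ℝ) / (j : ℝ) ^ 2
      ≤ ((b : ℝ) - (a : ℝ)) * ((a : ℝ) + 1) / ((a : ℝ) ^ 2 * (b : ℝ)) := by
  have haR : (1:ℝ) ≤ (a:ℝ) := by exact_mod_cast ha
  refine Nat.le_induction ?_ ?_
  · simp
  · intro b hb ih
    have hbR : (a:ℝ) ≤ (b:ℝ) := by exact_mod_cast hb
    have hb0 : (0:ℝ) < (b:ℝ) := by linarith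
    have ha0 : (0:ℝ) < (a:ℝ) := by linarith
    rw [Finset.sum_Ico_succ_top hb]
    push_cast
    have key : (1:ℝ) / (b:ℝ) ^ 2 ≤ ((a:ℝ) + 1) / ((a:ℝ) * (b:ℝ) * ((b:ℝ) + 1)) := by
      rw [div_le_div_iff₀ (by positivity) (by positivity)]
      nlinarith
    have iden : ((b:ℝ) + 1 - (a:ℝ)) * ((a:ℝ) + 1) / ((a:ℝ) ^ 2 * ((b:ℝ) + 1))
        = ((b:ℝ) - (a:ℝ)) * ((a:ℝ) + 1) / ((a:ℝ) ^ 2 * (b:ℝ))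
          + ((a:ℝ) + 1) / ((a:ℝ) * (b:ℝ) * ((b:ℝ) + 1)) := by
      field_simp
      ring
    rw [iden]
    linarith


lemma hw_sum (n m k : ℕ) (hm : m ≤ n) (hk : k ≤ n) :
    ∑ i ∈ range (k + 1), hw n m k i = 1 := by
  have h : ∑ i ∈ range (k + 1), m.choose i * (n - m).choose (k - i) = n.choose k := by
    have h2 := Nat.add_choose_eq m (n - m) k
    rw [Nat.add_sub_cancel' hm] at h2
    rw [h2, Finset.Nat.sum_antidiagonal_eq_sum_range_succ_mk]
  have hpos : (0:ℝ) < (n.choose k : ℝ) := by exact_mod_cast Nat.choose_pos hk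
  unfold hw
  rw [← Finset.sum_div, div_eq_one_iff_eq hpos.ne']
  exact_mod_cast h

lemma W_rec (n m s : ℕ) (f : ℕ → ℝ) :
    ∑ i ∈ range (s + 2),
        (m.choose i : ℝ) * ((n - m).choose (s + 1 - i) : ℝ) * ((s : ℝ) + 1) * f i
      = ∑ i ∈ range (s + 1), (m.choose i : ℝ) * ((n - m).choose (s - i) : ℝ) *
          (((n - m - (s - i) : ℕ) : ℝ) * f i + ((m - i : ℕ) : ℝ) * f (i + 1)) := by
  have split : ∀ i ∈ range (s + 2),
      (m.choose i : ℝ) * ((n - m).choose (s + 1 - i) : ℝ) * ((s : ℝ) + 1) * f i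
        = (m.choose i : ℝ) * ((((n - m).choose (s + 1 - i) * (s + 1 - i) : ℕ)) : ℝ) * f i
          + ((m.choose i * i : ℕ) : ℝ) * (((n - m).choose (s + 1 - i)) : ℝ) * f i := by
    intro i hi
    simp only [mem_range] at hi
    have his : i ≤ s + 1 := by omega
    have h1 : ((s + 1 - i : ℕ) : ℝ) = (s : ℝ) + 1 - (i : ℝ) := by
      push_cast [his]; ring
    push_cast
    rw [h1]; ring
  rw [Finset.sum_congr rfl split, Finset.sum_add_distrib]
  have hS1 : ∑ i ∈ range (s + 2),
      (m.choose i : ℝ) * ((((n - m).choose (s + 1 - i) * (s + 1 - i) : ℕ)) : ℝ) * f i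
      = ∑ i ∈ range (s + 1), (m.choose i : ℝ) * ((n - m).choose (s - i) : ℝ) *
          (((n - m - (s - i) : ℕ) : ℝ) * f i) := by
    rw [Finset.sum_range_succ]
    have hz : s + 1 - (s + 1) = 0 := by omega
    rw [hz]
    norm_num
    apply Finset.sum_congr rfl
    intro i hi
    simp only [mem_range] at hi
    have h2 : s + 1 - i = (s - i) + 1 := by omega
    rw [h2, ← Nat.cast_mul, Nat.choose_succ_right_eq, Nat.cast_mul]
    push_cast
    ring
  have hS2 : ∑ i ∈ range (s + 2),
      ((m.choose i * i : ℕ) : ℝ) * (((n - m).choose (s + 1 - i)) : ℝ) * f i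
      = ∑ i ∈ range (s + 1), (m.choose i : ℝ) * ((n - m).choose (s - i) : ℝ) *
          (((m - i : ℕ) : ℝ) * f (i + 1)) := by
    rw [Finset.sum_range_succ']
    norm_num
    apply Finset.sum_congr rfl
    intro i hi
    simp only [mem_range] at hi
    have h3 : s + 1 - (i + 1) = s - i := by omega
    rw [h3, show ((i:ℝ) + 1) = (((i + 1 : ℕ)) : ℝ) by push_cast; ring,
      ← Nat.cast_mul, Nat.choose_succ_right_eq, Nat.cast_mul]
    push_cast
    ring
  rw [hS1, hS2, ← Finset.sum_add_distrib]
  apply Finset.sum_congr rfl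
  intro i _
  ring

lemma hw_rec (n m s : ℕ) (hm : m ≤ n) (hs : s + 1 ≤ n) (f : ℕ → ℝ) :
    ∑ i ∈ range (s + 2), hw n m (s + 1) i * f i
      = ∑ i ∈ range (s + 1), hw n m s i *
          ((((n - m - (s - i) : ℕ)) : ℝ) * f i + ((m - i : ℕ) : ℝ) * f (i + 1))
            / ((n : ℝ) - (s : ℝ)) := by
  have hC : (0:ℝ) < (n.choose s : ℝ) := by
    exact_mod_cast Nat.choose_pos (by omega)
  have hC' : (0:ℝ) < (n.choose (s + 1) : ℝ) := by
    exact_mod_cast Nat.choose_pos hs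
  have hns : (0:ℝ) < (n : ℝ) - (s : ℝ) := by
    have : (s:ℝ) + 1 ≤ (n:ℝ) := by exact_mod_cast hs
    linarith
  have hs1 : (0:ℝ) < (s:ℝ) + 1 := by positivity
  have hCC : (n.choose (s + 1) : ℝ) * ((s : ℝ) + 1) = (n.choose s : ℝ) * ((n : ℝ) - (s : ℝ)) := by
    have h4 := Nat.choose_succ_right_eq n s
    have hcast : ((n - s : ℕ) : ℝ) = (n : ℝ) - (s : ℝ) := by
      push_cast [Nat.le_of_succ_le hs]; ring
    rw [← hcast]
    exact_mod_cast h4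
  have key := W_rec n m s f
  calc ∑ i ∈ range (s + 2), hw n m (s + 1) i * f i
      = (∑ i ∈ range (s + 2),
          (m.choose i : ℝ) * ((n - m).choose (s + 1 - i) : ℝ) * ((s : ℝ) + 1) * f i)
            / ((n.choose (s + 1) : ℝ) * ((s : ℝ) + 1)) := by
        rw [Finset.sum_div]
        apply Finset.sum_congr rfl
        intro i _
        unfold hw
        field_simp
        try ring
    _ = (∑ i ∈ range (s + 1), (m.choose i : ℝ) * ((n - m).choose (s - i) : ℝ) *
          (((n - m - (s - i) : ℕ) : ℝ) * f i + ((m - i : ℕ) : ℝ) * f (i + 1)))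
            / ((n.choose s : ℝ) * ((n : ℝ) - (s : ℝ))) := by rw [key, hCC]
    _ = ∑ i ∈ range (s + 1), hw n m s i *
          ((((n - m - (s - i) : ℕ)) : ℝ) * f i + ((m - i : ℕ) : ℝ) * f (i + 1))
            / ((n : ℝ) - (s : ℝ)) := by
        rw [Finset.sum_div]
        apply Finset.sum_congr rfl
        intro i _
        unfold hw
        field_simp
        try ring

noncomputable def Vr (n s : ℕ) : ℝ := ∑ j ∈ Finset.Ico (n - s) n, 1 / (j : ℝ) ^ 2

lemma mgf_le (n m : ℕ) (hm : m ≤ n) (l : ℝ) :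
    ∀ s : ℕ, s < n →
      ∑ i ∈ range (s + 1),
          hw n m s i *
            Real.exp (l * ((i : ℝ) - (s : ℝ) * ((m : ℝ) / (n : ℝ))) / ((n : ℝ) - (s : ℝ)))
        ≤ Real.exp (l ^ 2 / 8 * Vr n s) := by
  intro s
  induction s with
  | zero =>
      intro _
      have h0 : hw n m 0 0 = 1 := by
        unfold hw; simp
      simp [h0, Vr]
  | succ s ih =>
      intro hs
      have hsn : s < n := by omega
      have ihs := ih hsn
      have hn0 : (0:ℝ) < n := by
        have : (0:ℕ) < n := by omega
        exact_mod_cast this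
      have hnsR : (0:ℝ) < (n:ℝ) - s := by
        have : (s:ℝ) < n := by exact_mod_cast hsn
        linarith
      have hns1R : (0:ℝ) < (n:ℝ) - s - 1 := by
        have : ((s:ℝ) + 1) < n := by exact_mod_cast hs
        linarith
      set p : ℝ := (m:ℝ) / (n:ℝ) with hp
      set f : ℕ → ℝ := fun i =>
        Real.exp (l * ((i : ℝ) - ((s : ℝ) + 1) * p) / ((n : ℝ) - ((s : ℝ) + 1))) with hf
      have hrec := hw_rec n m s hm (by omega) f
      set K : ℝ := Real.exp (l ^ 2 / (8 * ((n:ℝ) - s - 1) ^ 2)) with hK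
      have step : ∀ i ∈ range (s + 1),
          hw n m s i *
            ((((n - m - (s - i) : ℕ)) : ℝ) * f i + ((m - i : ℕ) : ℝ) * f (i + 1))
              / ((n : ℝ) - (s : ℝ))
          ≤ hw n m s i * Real.exp (l * ((i:ℝ) - (s:ℝ) * p) / ((n:ℝ) - (s:ℝ))) * K := by
        intro i hi
        simp only [mem_range] at hi
        have his : i ≤ s := by omega
        rcases eq_or_ne (hw n m s i) 0 with h0 | h0
        · rw [h0]; simp
        · have hnum : (m.choose i : ℝ) ≠ 0 ∧ ((n - m).choose (s - i) : ℝ) ≠ 0 := by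
            unfold hw at h0
            have := (div_ne_zero_iff.mp h0).1
            exact mul_ne_zero_iff.mp this
          have him : i ≤ m := by
            by_contra hc
            exact hnum.1 (by exact_mod_cast Nat.choose_eq_zero_iff.mpr (by omega))
          have hsi : s - i ≤ n - m := by
            by_contra hc
            exact hnum.2 (by exact_mod_cast Nat.choose_eq_zero_iff.mpr (by omega))
          have hmsn : m + s ≤ n + i := by omega
          have c1 : ((m - i : ℕ) : ℝ) = (m:ℝ) - i := by rw [Nat.cast_sub him]
          have c2 : ((n - m - (s - i) : ℕ) : ℝ) = (n:ℝ) - m - ((s:ℝ) - i) := by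
            rw [Nat.cast_sub hsi, Nat.cast_sub hm, Nat.cast_sub his]
          set g : ℝ := ((m:ℝ) - i) / ((n:ℝ) - s) with hg
          have hg0 : 0 ≤ g := by
            apply div_nonneg _ hnsR.le
            have : (i:ℝ) ≤ m := by exact_mod_cast him
            linarith
          have hg1 : g ≤ 1 := by
            rw [hg, div_le_one hnsR]
            have : (m:ℝ) + s ≤ (n:ℝ) + i := by exact_mod_cast hmsn
            linarith
          have hne1 : (n:ℝ) ≠ 0 := hn0.ne'
          have hne2 : (n:ℝ) - s ≠ 0 := hnsR.ne'
          have hne3 : (n:ℝ) - s - 1 ≠ 0 := hns1R.ne'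
          have hden : (n:ℝ) - ((s:ℝ) + 1) = (n:ℝ) - s - 1 := by ring
          set u : ℝ := l / ((n:ℝ) - s - 1) with hu
          set A0 : ℝ := l * ((i : ℝ) - ((s : ℝ) + 1) * p) / ((n : ℝ) - ((s : ℝ) + 1)) with hA0
          have hfi : f i = Real.exp A0 := rfl
          have hfi1 : f (i + 1) = Real.exp (A0 + u) := by
            rw [hf]
            simp only []
            rw [hA0, hu]
            congr 1
            rw [hden, ← add_div]
            congr 1
            push_cast
            ring
          have hbr : ((((n - m - (s - i) : ℕ)) : ℝ) * f i + ((m - i : ℕ) : ℝ) * f (i + 1))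
              / ((n : ℝ) - (s : ℝ)) = (1 - g) * f i + g * f (i + 1) := by
            rw [c1, c2, hg]
            have hone : (1 : ℝ) - ((m:ℝ) - i)/((n:ℝ) - s)
                = ((n:ℝ) - m - ((s:ℝ) - i))/((n:ℝ) - s) := by
              field_simp
              ring
            rw [hone, div_mul_eq_mul_div, div_mul_eq_mul_div, ← add_div]
          rw [mul_div_assoc, hbr, hfi, hfi1]
          have hexp : (1 - g) * Real.exp A0 + g * Real.exp (A0 + u)
              = Real.exp A0 * (1 - g + g * Real.exp u) := by
            rw [Real.exp_add]; ring
          rw [hexp]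
          have hmgf := bern_mgf g hg0 hg1 u
          have h5 : Real.exp A0 * (1 - g + g * Real.exp u)
              ≤ Real.exp A0 * Real.exp (g * u + u ^ 2 / 8) :=
            mul_le_mul_of_nonneg_left hmgf (Real.exp_pos A0).le
          have h6 : Real.exp A0 * Real.exp (g * u + u ^ 2 / 8)
              = Real.exp (l * ((i:ℝ) - (s:ℝ) * p) / ((n:ℝ) - (s:ℝ))) * K := by
            rw [← Real.exp_add, hK, ← Real.exp_add]
            congr 1
            rw [hA0, hu, hg, hp, hden]
            field_simp
            ring
          calc hw n m s i * (Real.exp A0 * (1 - g + g * Real.exp u))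
              ≤ hw n m s i * (Real.exp A0 * Real.exp (g * u + u ^ 2 / 8)) :=
                mul_le_mul_of_nonneg_left h5 (hw_nonneg n m s i)
            _ = hw n m s i * Real.exp (l * ((i:ℝ) - (s:ℝ) * p) / ((n:ℝ) - (s:ℝ))) * K := by
                rw [h6]; ring
      have hVsplit : l ^ 2 / 8 * Vr n (s + 1)
          = l ^ 2 / 8 * Vr n s + l ^ 2 / (8 * ((n:ℝ) - s - 1) ^ 2) := by
        have h1 : n - (s + 1) = n - s - 1 := by omega
        have h2 : (n - s - 1) + 1 = n - s := by omega
        have hcast : ((n - s - 1 : ℕ) : ℝ) = (n:ℝ) - s - 1 := by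
          have h3 : s + 1 ≤ n := by omega
          rw [Nat.sub_sub, Nat.cast_sub h3]
          push_cast
          ring
        have h4 : Vr n (s + 1) = 1 / ((n:ℝ) - s - 1) ^ 2 + Vr n s := by
          unfold Vr
          rw [h1, Finset.sum_eq_sum_Ico_succ_bot (show n - s - 1 < n by omega), h2, hcast]
        rw [h4]
        field_simp
        ring
      calc ∑ i ∈ range (s + 1 + 1),
            hw n m (s + 1) i *
              Real.exp (l * ((i : ℝ) - ((s + 1 : ℕ) : ℝ) * ((m : ℝ) / (n : ℝ)))
                / ((n : ℝ) - ((s + 1 : ℕ) : ℝ)))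
          = ∑ i ∈ range (s + 2), hw n m (s + 1) i * f i := by
            apply Finset.sum_congr rfl
            intro i _
            rw [hf]
            push_cast
            norm_num
            exact Or.inl rfl
        _ = ∑ i ∈ range (s + 1), hw n m s i *
              ((((n - m - (s - i) : ℕ)) : ℝ) * f i + ((m - i : ℕ) : ℝ) * f (i + 1))
                / ((n : ℝ) - (s : ℝ)) := hrec
        _ ≤ ∑ i ∈ range (s + 1),
              hw n m s i * Real.exp (l * ((i:ℝ) - (s:ℝ) * p) / ((n:ℝ) - (s:ℝ))) * K :=
            Finset.sum_le_sum step
        _ = (∑ i ∈ range (s + 1),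
              hw n m s i * Real.exp (l * ((i:ℝ) - (s:ℝ) * p) / ((n:ℝ) - (s:ℝ)))) * K := by
            rw [Finset.sum_mul]
        _ ≤ Real.exp (l ^ 2 / 8 * Vr n s) * K :=
            mul_le_mul_of_nonneg_right ihs (Real.exp_pos _).le
        _ = Real.exp (l ^ 2 / 8 * Vr n (s + 1)) := by
            rw [hK, ← Real.exp_add, hVsplit]

lemma tail_upper_s13 (n m s : ℕ) (hm : m ≤ n) (hs1 : 1 ≤ s) (hsn : s < n) (τ : ℝ) (hτ : 0 ≤ τ) :
    ∑ i ∈ range (s + 1), (if (s:ℝ) * ((m:ℝ)/(n:ℝ)) + τ < (i:ℝ) then hw n m s i else 0)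
      ≤ Real.exp (-(2 * τ ^ 2) / (((n:ℝ) - (s:ℝ)) ^ 2 * Vr n s)) := by
  have hV : 0 < Vr n s := by
    unfold Vr
    apply Finset.sum_pos
    · intro j hj
      rw [mem_Ico] at hj
      have : 0 < j := by omega
      have : (0:ℝ) < (j:ℝ) := by exact_mod_cast this
      positivity
    · exact ⟨n - s, by rw [mem_Ico]; omega⟩
  have hns : (0:ℝ) < (n:ℝ) - s := by
    have : (s:ℝ) < n := by exact_mod_cast hsn
    linarith
  set l : ℝ := 4 * τ / (((n:ℝ) - s) * Vr n s) with hl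
  have hl0 : 0 ≤ l := by positivity
  have step : ∀ i ∈ range (s + 1),
      (if (s:ℝ) * ((m:ℝ)/(n:ℝ)) + τ < (i:ℝ) then hw n m s i else 0)
        ≤ hw n m s i * Real.exp (l * ((i:ℝ) - (s:ℝ) * ((m:ℝ)/(n:ℝ))) / ((n:ℝ) - (s:ℝ)))
            * Real.exp (-(l * τ) / ((n:ℝ) - (s:ℝ))) := by
    intro i _
    split_ifs with h
    · rw [mul_assoc, ← Real.exp_add]
      nth_rewrite 1 [← mul_one (hw n m s i)]
      apply mul_le_mul_of_nonneg_left _ (hw_nonneg n m s i)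
      have harg : l * ((i:ℝ) - (s:ℝ) * ((m:ℝ)/(n:ℝ))) / ((n:ℝ) - (s:ℝ))
            + -(l * τ) / ((n:ℝ) - (s:ℝ))
          = l * (((i:ℝ) - ((s:ℝ) * ((m:ℝ)/(n:ℝ)) + τ)) / ((n:ℝ) - (s:ℝ))) := by ring
      rw [harg]
      apply Real.one_le_exp
      have h2 : (0:ℝ) ≤ (i:ℝ) - ((s:ℝ) * ((m:ℝ)/(n:ℝ)) + τ) := by linarith
      exact mul_nonneg hl0 (div_nonneg h2 hns.le)
    · exact mul_nonneg (mul_nonneg (hw_nonneg n m s i) (Real.exp_pos _).le)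
        (Real.exp_pos _).le
  calc ∑ i ∈ range (s + 1), (if (s:ℝ) * ((m:ℝ)/(n:ℝ)) + τ < (i:ℝ) then hw n m s i else 0)
      ≤ ∑ i ∈ range (s + 1),
          hw n m s i * Real.exp (l * ((i:ℝ) - (s:ℝ) * ((m:ℝ)/(n:ℝ))) / ((n:ℝ) - (s:ℝ)))
            * Real.exp (-(l * τ) / ((n:ℝ) - (s:ℝ))) := Finset.sum_le_sum step
    _ = (∑ i ∈ range (s + 1),
          hw n m s i * Real.exp (l * ((i:ℝ) - (s:ℝ) * ((m:ℝ)/(n:ℝ))) / ((n:ℝ) - (s:ℝ))))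
            * Real.exp (-(l * τ) / ((n:ℝ) - (s:ℝ))) := by rw [Finset.sum_mul]
    _ ≤ Real.exp (l ^ 2 / 8 * Vr n s) * Real.exp (-(l * τ) / ((n:ℝ) - (s:ℝ))) :=
        mul_le_mul_of_nonneg_right (mgf_le n m hm l s hsn) (Real.exp_pos _).le
    _ = Real.exp (l ^ 2 / 8 * Vr n s + -(l * τ) / ((n:ℝ) - (s:ℝ))) := (Real.exp_add _ _).symm
    _ = Real.exp (-(2 * τ ^ 2) / (((n:ℝ) - (s:ℝ)) ^ 2 * Vr n s)) := by
        congr 1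
        rw [hl]
        field_simp
        ring

lemma hw_reflect (n m s i : ℕ) (hm : m ≤ n) (hi : i ≤ s) :
    hw n m s (s - i) = hw n (n - m) s i := by
  unfold hw
  have h1 : s - (s - i) = i := by omega
  have h2 : n - (n - m) = m := by omega
  rw [h1, h2]
  ring

lemma tail_lower_s13 (n m s : ℕ) (hm : m ≤ n) (hs1 : 1 ≤ s) (hsn : s < n) (τ : ℝ) (hτ : 0 ≤ τ) :
    ∑ i ∈ range (s + 1), (if (i:ℝ) < (s:ℝ) * ((m:ℝ)/(n:ℝ)) - τ then hw n m s i else 0)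
      ≤ Real.exp (-(2 * τ ^ 2) / (((n:ℝ) - (s:ℝ)) ^ 2 * Vr n s)) := by
  have hn0 : (0:ℝ) < n := by
    have : (0:ℕ) < n := by omega
    exact_mod_cast this
  have key : ∑ i ∈ range (s + 1), (if (i:ℝ) < (s:ℝ) * ((m:ℝ)/(n:ℝ)) - τ then hw n m s i else 0)
      = ∑ i ∈ range (s + 1),
          (if (s:ℝ) * (((n - m : ℕ) : ℝ)/(n:ℝ)) + τ < (i:ℝ) then hw n (n - m) s i else 0) := by
    rw [← Finset.sum_range_reflect]
    apply Finset.sum_congr rfl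
    intro i hi
    simp only [mem_range] at hi
    have his : i ≤ s := by omega
    have hidx : s + 1 - 1 - i = s - i := by omega
    rw [hidx, hw_reflect n m s i hm his]
    have hcast : ((s - i : ℕ) : ℝ) = (s:ℝ) - i := by rw [Nat.cast_sub his]
    have hcast2 : ((n - m : ℕ) : ℝ) = (n:ℝ) - m := by rw [Nat.cast_sub hm]
    have hfact : (s:ℝ) * (((n:ℝ) - (m:ℝ))/(n:ℝ)) = (s:ℝ) - (s:ℝ) * ((m:ℝ)/(n:ℝ)) := by
      field_simp
    apply if_congr _ rfl rfl
    rw [hcast, hcast2, hfact]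
    constructor <;> intro h <;> linarith
  rw [key]
  exact tail_upper_s13 n (n - m) s (by omega) hs1 hsn τ hτ

lemma hw_support (n m k i : ℕ) (h : hw n m k i ≠ 0) : i ≤ m ∧ k - i ≤ n - m := by
  unfold hw at h
  have h1 := (div_ne_zero_iff.mp h).1
  obtain ⟨ha, hb⟩ := mul_ne_zero_iff.mp h1
  constructor
  · by_contra hc
    exact ha (by exact_mod_cast Nat.choose_eq_zero_iff.mpr (by omega))
  · by_contra hc
    exact hb (by exact_mod_cast Nat.choose_eq_zero_iff.mpr (by omega))

lemma hw_compl (n m k a : ℕ) (hm : m ≤ n) (hk : k ≤ n) (ha : a ≤ k) (ham : a ≤ m)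
    (hsupp : k + m ≤ n + a) : hw n m k a = hw n m (n - k) (m - a) := by
  unfold hw
  have e1 : m.choose (m - a) = m.choose a := Nat.choose_symm ham
  have e2 : (n - k) - (m - a) = (n - m) - (k - a) := by omega
  have e3 : (n - m).choose ((n - m) - (k - a)) = (n - m).choose (k - a) :=
    Nat.choose_symm (by omega)
  have e4 : n.choose (n - k) = n.choose k := Nat.choose_symm hk
  rw [e1, e2, e3, e4]

lemma hw_transfer (n m k : ℕ) (hm : m ≤ n) (hk : k ≤ n) (Q : ℝ → Prop) [DecidablePred Q] :
    ∑ i ∈ range (k + 1), (if Q (i:ℝ) then hw n m k i else 0)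
      = ∑ j ∈ range (n - k + 1), (if Q ((m:ℝ) - (j:ℝ)) then hw n m (n - k) j else 0) := by
  rw [← Finset.sum_filter_of_ne (p := fun i => i ≤ m ∧ k + m ≤ n + i) (fun i hi hne => by
    simp only [mem_range] at hi
    have hhw : hw n m k i ≠ 0 := by
      intro hc
      apply hne
      rw [hc]
      split_ifs <;> rfl
    have := hw_support n m k i hhw
    omega)]
  have hfR : ∀ j ∈ range (n - k + 1),
      (if Q ((m:ℝ) - (j:ℝ)) then hw n m (n - k) j else 0) ≠ 0 → (j ≤ m ∧ m ≤ k + j) := by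
    intro j hj hne
    simp only [mem_range] at hj
    have hhw : hw n m (n - k) j ≠ 0 := by
      intro hc
      apply hne
      rw [hc]
      split_ifs <;> rfl
    have := hw_support n m (n - k) j hhw
    omega
  conv_rhs => rw [← Finset.sum_filter_of_ne hfR]
  refine Finset.sum_bij' (fun i _ => m - i) (fun j _ => m - j) ?_ ?_ ?_ ?_ ?_
  · intro a ha
    simp only [mem_filter, mem_range] at ha
    simp only [mem_filter, mem_range]
    omega
  · intro a ha
    simp only [mem_filter, mem_range] at ha
    simp only [mem_filter, mem_range]
    omega
  · intro a ha
    simp only [mem_filter, mem_range] at ha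
    omega
  · intro a ha
    simp only [mem_filter, mem_range] at ha
    omega
  · intro a ha
    simp only [mem_filter, mem_range] at ha
    have hcast : ((m - a : ℕ) : ℝ) = (m:ℝ) - a := by rw [Nat.cast_sub ha.2.1]
    rw [hcast, sub_sub_cancel]
    have hval : hw n m k a = hw n m (n - k) (m - a) :=
      hw_compl n m k a hm hk (by omega) ha.2.1 (by omega)
    rw [hval]

lemma Vr_pos (n s : ℕ) (hs1 : 1 ≤ s) (hsn : s < n) : 0 < Vr n s := by
  unfold Vr
  apply Finset.sum_pos
  · intro j hj
    rw [mem_Ico] at hj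
    have : 0 < j := by omega
    have : (0:ℝ) < (j:ℝ) := by exact_mod_cast this
    positivity
  · exact ⟨n - s, by rw [mem_Ico]; omega⟩

lemma exp_comp (kk t ρ D : ℝ) (hk : 0 ≤ kk) (hρ : 0 < ρ) (hD : 0 < D) (h : D ≤ kk * ρ) :
    Real.exp (-(2 * (kk * t) ^ 2) / D) ≤ Real.exp (-(2 * kk * t ^ 2) / ρ) := by
  apply Real.exp_le_exp.mpr
  rw [neg_div, neg_div, neg_le_neg_iff, div_le_div_iff₀ hρ hD]
  have h2 : (0:ℝ) ≤ 2 * kk * t ^ 2 := by positivity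
  nlinarith [mul_le_mul_of_nonneg_left h h2]

lemma main_upper (n m k : ℕ) (hm : m ≤ n) (hk1 : 1 ≤ k) (hkn : k < n) (t : ℝ) (ht : 0 ≤ t) :
    ∑ i ∈ range (k + 1),
        (if (k:ℝ) * ((m:ℝ)/(n:ℝ)) + (k:ℝ) * t < (i:ℝ) then hw n m k i else 0)
      ≤ Real.exp (-(2 * (k:ℝ) * t ^ 2) / rho n k) := by
  classical
  have hn0 : (0:ℝ) < n := by
    have : (0:ℕ) < n := by omega
    exact_mod_cast this
  have hk0 : (0:ℝ) < k := by
    have : (0:ℕ) < k := by omega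
    exact_mod_cast this
  have hknR : (k:ℝ) < n := by exact_mod_cast hkn
  have hnk0 : (0:ℝ) < (n:ℝ) - k := by linarith
  have hcnk : ((n - k : ℕ) : ℝ) = (n:ℝ) - k := by rw [Nat.cast_sub hkn.le]
  by_cases hc : (k : ℝ) ≤ (n : ℝ) / 2
  · have hρ : rho n k = 1 - ((k:ℝ) - 1) / n := by unfold rho; rw [if_pos hc]
    have hρpos : 0 < rho n k := by
      rw [hρ]
      have h1 : ((k:ℝ) - 1) / n < 1 := by
        rw [div_lt_one hn0]; linarith
      linarith
    have hVpos := Vr_pos n k hk1 hkn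
    have hs := sum_inv_sq_le (n - k) (by omega) n (by omega)
    have hVle : Vr n k ≤ (k:ℝ) * rho n k / (((n:ℝ) - k) ^ 2) := by
      calc Vr n k ≤ ((n:ℝ) - ((n - k : ℕ):ℝ)) * (((n - k : ℕ):ℝ) + 1)
            / (((n - k : ℕ):ℝ) ^ 2 * (n:ℝ)) := hs
        _ = (k:ℝ) * rho n k / (((n:ℝ) - k) ^ 2) := by
            rw [hcnk, hρ]
            field_simp
            ring
    have hD : ((n:ℝ) - k) ^ 2 * Vr n k ≤ (k:ℝ) * rho n k := by
      calc ((n:ℝ) - k) ^ 2 * Vr n k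
          ≤ ((n:ℝ) - k) ^ 2 * ((k:ℝ) * rho n k / (((n:ℝ) - k) ^ 2)) :=
            mul_le_mul_of_nonneg_left hVle (by positivity)
        _ = (k:ℝ) * rho n k := by field_simp
    calc ∑ i ∈ range (k + 1),
          (if (k:ℝ) * ((m:ℝ)/(n:ℝ)) + (k:ℝ) * t < (i:ℝ) then hw n m k i else 0)
        ≤ Real.exp (-(2 * ((k:ℝ) * t) ^ 2) / (((n:ℝ) - (k:ℝ)) ^ 2 * Vr n k)) :=
          tail_upper_s13 n m k hm hk1 hkn ((k:ℝ) * t) (by positivity)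
      _ ≤ Real.exp (-(2 * (k:ℝ) * t ^ 2) / rho n k) :=
          exp_comp (k:ℝ) t (rho n k) _ hk0.le hρpos (mul_pos (by positivity) hVpos) hD
  · have hρ : rho n k = (1 - (k:ℝ) / n) * (1 + 1 / (k:ℝ)) := by unfold rho; rw [if_neg hc]
    have hρpos : 0 < rho n k := by
      rw [hρ]
      have h1 : (k:ℝ) / n < 1 := by rw [div_lt_one hn0]; exact hknR
      have h2 : (0:ℝ) < 1 + 1 / (k:ℝ) := by positivity
      nlinarith
    have hs1' : 1 ≤ n - k := by omega
    have hsn' : n - k < n := by omega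
    have htr := hw_transfer n m k hm hkn.le
      (fun x => (k:ℝ) * ((m:ℝ)/(n:ℝ)) + (k:ℝ) * t < x)
    rw [htr]
    have hmn' : (n:ℝ) * ((m:ℝ)/(n:ℝ)) = (m:ℝ) := by field_simp
    have hcond : ∀ j : ℕ,
        ((k:ℝ) * ((m:ℝ)/(n:ℝ)) + (k:ℝ) * t < (m:ℝ) - (j:ℝ))
          ↔ ((j:ℝ) < ((n - k : ℕ):ℝ) * ((m:ℝ)/(n:ℝ)) - (k:ℝ) * t) := by
      intro j
      rw [hcnk]
      have hexp : ((n:ℝ) - k) * ((m:ℝ)/(n:ℝ))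
          = (n:ℝ) * ((m:ℝ)/(n:ℝ)) - (k:ℝ) * ((m:ℝ)/(n:ℝ)) := by ring
      constructor <;> intro h <;> · rw [hexp, hmn'] at * ; linarith
    have hsum_eq : ∑ j ∈ range (n - k + 1),
          (if (k:ℝ) * ((m:ℝ)/(n:ℝ)) + (k:ℝ) * t < (m:ℝ) - (j:ℝ) then hw n m (n - k) j else 0)
        = ∑ j ∈ range (n - k + 1),
            (if (j:ℝ) < ((n - k : ℕ):ℝ) * ((m:ℝ)/(n:ℝ)) - (k:ℝ) * t
              then hw n m (n - k) j else 0) :=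
      Finset.sum_congr rfl (fun j _ => if_congr (hcond j) rfl rfl)
    rw [hsum_eq]
    have htl := tail_lower_s13 n m (n - k) hm hs1' hsn' ((k:ℝ) * t) (by positivity)
    refine le_trans htl ?_
    have hkey : -(2 * ((k:ℝ) * t) ^ 2) / (((n:ℝ) - ((n - k : ℕ):ℝ)) ^ 2 * Vr n (n - k))
        = -(2 * ((k:ℝ) * t) ^ 2) / ((k:ℝ) ^ 2 * Vr n (n - k)) := by
      rw [hcnk]
      ring_nf
    rw [hkey]
    have hVr2 : Vr n (n - k) = ∑ j ∈ Finset.Ico k n, 1 / (j:ℝ) ^ 2 := by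
      unfold Vr
      have h3 : n - (n - k) = k := by omega
      rw [h3]
    have hVle : Vr n (n - k) ≤ ((n:ℝ) - k) * ((k:ℝ) + 1) / ((k:ℝ) ^ 2 * n) := by
      rw [hVr2]
      exact sum_inv_sq_le k hk1 n hkn.le
    have hVpos := Vr_pos n (n - k) hs1' hsn'
    have hD : (k:ℝ) ^ 2 * Vr n (n - k) ≤ (k:ℝ) * rho n k := by
      have hkρ : (k:ℝ) * rho n k = ((n:ℝ) - k) * ((k:ℝ) + 1) / (n:ℝ) := by
        rw [hρ]
        field_simp
      rw [hkρ]
      calc (k:ℝ) ^ 2 * Vr n (n - k)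
          ≤ (k:ℝ) ^ 2 * (((n:ℝ) - k) * ((k:ℝ) + 1) / ((k:ℝ) ^ 2 * n)) :=
            mul_le_mul_of_nonneg_left hVle (by positivity)
        _ = ((n:ℝ) - k) * ((k:ℝ) + 1) / (n:ℝ) := by
            field_simp
    exact exp_comp (k:ℝ) t (rho n k) _ hk0.le hρpos (mul_pos (by positivity) hVpos) hD

lemma main_lower (n m k : ℕ) (hm : m ≤ n) (hk1 : 1 ≤ k) (hkn : k < n) (t : ℝ) (ht : 0 ≤ t) :
    ∑ i ∈ range (k + 1),
        (if (i:ℝ) < (k:ℝ) * ((m:ℝ)/(n:ℝ)) - (k:ℝ) * t then hw n m k i else 0)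
      ≤ Real.exp (-(2 * (k:ℝ) * t ^ 2) / rho n k) := by
  classical
  have hn0 : (0:ℝ) < n := by
    have : (0:ℕ) < n := by omega
    exact_mod_cast this
  have key : ∑ i ∈ range (k + 1),
      (if (i:ℝ) < (k:ℝ) * ((m:ℝ)/(n:ℝ)) - (k:ℝ) * t then hw n m k i else 0)
      = ∑ i ∈ range (k + 1),
          (if (k:ℝ) * (((n - m : ℕ) : ℝ)/(n:ℝ)) + (k:ℝ) * t < (i:ℝ)
            then hw n (n - m) k i else 0) := by
    rw [← Finset.sum_range_reflect]
    apply Finset.sum_congr rfl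
    intro i hi
    simp only [mem_range] at hi
    have his : i ≤ k := by omega
    have hidx : k + 1 - 1 - i = k - i := by omega
    rw [hidx, hw_reflect n m k i hm his]
    have hcast : ((k - i : ℕ) : ℝ) = (k:ℝ) - i := by rw [Nat.cast_sub his]
    have hcast2 : ((n - m : ℕ) : ℝ) = (n:ℝ) - m := by rw [Nat.cast_sub hm]
    have hfact : (k:ℝ) * (((n:ℝ) - (m:ℝ))/(n:ℝ))
        = (k:ℝ) - (k:ℝ) * ((m:ℝ)/(n:ℝ)) := by
      field_simp
    apply if_congr _ rfl rfl
    rw [hcast, hcast2, hfact]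
    constructor <;> intro h <;> linarith
  rw [key]
  exact main_upper n (n - m) k (by omega) hk1 hkn t ht

theorem qerror_bound_hoeffding_serfling (n m k : ℕ) (hn : 2 ≤ n) (hm0 : 0 < m) (hmn : m ≤ n)
    (hk1 : 1 ≤ k) (hkn : k < n) (p : ℝ) (hp : p = (m : ℝ) / n) (q : ℝ) (hq : 1 ≤ q) :
    1 - Real.exp (-(2 * k * (p * q - p) ^ 2) / rho n k)
      - Real.exp (-(2 * k * (p - p / q) ^ 2) / rho n k) ≤
    hyperProb n m k (fun i => k * p / q ≤ (i : ℝ) ∧ (i : ℝ) ≤ q * k * p) := by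
  classical
  have hn0 : (0:ℝ) < n := by
    have : (0:ℕ) < n := by omega
    exact_mod_cast this
  have hq0 : (0:ℝ) < q := by linarith
  have hp0 : 0 ≤ p := by rw [hp]; positivity
  have ht1 : 0 ≤ p * q - p := by nlinarith
  have ht2 : 0 ≤ p - p / q := by
    have := div_le_self hp0 hq
    linarith
  have hU := main_upper n m k hmn hk1 hkn (p * q - p) ht1
  have hL := main_lower n m k hmn hk1 hkn (p - p / q) ht2
  have e2 : (k:ℝ) * ((m:ℝ)/(n:ℝ)) + (k:ℝ) * (p * q - p) = q * (k:ℝ) * p := by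
    rw [hp]; ring
  have e1 : (k:ℝ) * ((m:ℝ)/(n:ℝ)) - (k:ℝ) * (p - p / q) = (k:ℝ) * p / q := by
    rw [hp]; ring
  rw [e2] at hU
  rw [e1] at hL
  have hbridge : ∑ i ∈ range (k + 1),
      (if ((k:ℝ) * p / q ≤ (i:ℝ) ∧ (i:ℝ) ≤ q * (k:ℝ) * p) then hw n m k i else 0)
      = hyperProb n m k (fun i => (k:ℝ) * p / q ≤ (i : ℝ) ∧ (i : ℝ) ≤ q * (k:ℝ) * p) := by
    unfold hyperProb hw
    exact Finset.sum_congr rfl (fun i _ => by split_ifs <;> rfl)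
  have hsplit : ∀ i ∈ range (k + 1),
      hw n m k i
        ≤ (if ((k:ℝ) * p / q ≤ (i:ℝ) ∧ (i:ℝ) ≤ q * (k:ℝ) * p) then hw n m k i else 0)
          + (if (i:ℝ) < (k:ℝ) * p / q then hw n m k i else 0)
          + (if q * (k:ℝ) * p < (i:ℝ) then hw n m k i else 0) := by
    intro i _
    have h0 := hw_nonneg n m k i
    have nn2 : (0:ℝ) ≤ (if (i:ℝ) < (k:ℝ) * p / q then hw n m k i else 0) := by
      split_ifs
      exacts [h0, le_rfl]
    have nn3 : (0:ℝ) ≤ (if q * (k:ℝ) * p < (i:ℝ) then hw n m k i else 0) := by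
      split_ifs
      exacts [h0, le_rfl]
    by_cases h1 : (k:ℝ) * p / q ≤ (i:ℝ)
    · by_cases h2 : (i:ℝ) ≤ q * (k:ℝ) * p
      · rw [if_pos ⟨h1, h2⟩]
        linarith
      · rw [if_neg (fun hc => h2 hc.2), if_pos (not_le.mp h2)]
        linarith
    · rw [if_neg (fun hc => h1 hc.1), if_pos (not_le.mp h1)]
      linarith
  have hsum := Finset.sum_le_sum hsplit
  rw [Finset.sum_add_distrib, Finset.sum_add_distrib, hw_sum n m k hmn hkn.le, hbridge] at hsum
  linarith [hU, hL, hsum]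
end
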